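/- For every x=(x₂,x₃)∈ℝ², the function t ↦ (A+A')(x₂ + t·x₃, x₃ + t·x₂) is differentiable at t=0, and (B+B')(x) − d/dt|_{t=0} (A+A')(x₂ + t·x₃, x₃ + t·x₂) = 2^{−3/2}·(4x₂² − 1/π)·e^{−π(x₂²+x₃²)}. (Together with D(B+B')=A+A', this expresses the identity d φ₀,₁ = φ₁,₁ of paper Theorem 5.11: the Kudla–Millson form φ₁,₁ on D_W is exact with explicit primitive φ₀,₁ = ψ̃₀,₁ + ψ̃'₀,₁.) -/

import Mathlib

open MeasureTheory

/-- The upper incomplete gamma function `Γ(1/2, a) = ∫_a^∞ e^{-u} u^{-1/2} du`. -/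
noncomputable def Ginc (a : ℝ) : ℝ := ∫ u in Set.Ioi a, Real.exp (-u) * u ^ (-(1:ℝ)/2)

/-- The `e₂`-component `A` of the singular Schwartz function `ψ̃₀,₁`. -/
noncomputable def A (x : ℝ × ℝ) : ℝ :=
  (1 / (2 * Real.sqrt Real.pi)) * x.1 * Real.sign x.2 * Ginc (2 * Real.pi * x.2 ^ 2) *
    Real.exp (-(Real.pi * (x.1 ^ 2 - x.2 ^ 2)))

/-- The `e₃`-component `B` of the singular Schwartz function `ψ̃₀,₁`. -/
noncomputable def B (x : ℝ × ℝ) : ℝ :=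
  -(1 / (2 * Real.sqrt 2 * Real.pi)) * Real.exp (-(Real.pi * (x.1 ^ 2 + x.2 ^ 2)))
  + (1 / (2 * Real.sqrt Real.pi)) * |x.2| * Ginc (2 * Real.pi * x.2 ^ 2) *
      Real.exp (-(Real.pi * (x.1 ^ 2 - x.2 ^ 2)))

/-- The `e₃`-component `B'` of the singular function `ψ̃'₀,₁`. -/
noncomputable def B' (x : ℝ × ℝ) : ℝ :=
  if x.1 ^ 2 - x.2 ^ 2 > 0 then
    (1/2) * min |x.1 - x.2| |x.1 + x.2| * Real.exp (-(Real.pi * (x.1 ^ 2 - x.2 ^ 2)))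
  else 0

/-- The `e₂`-component `A'` of the singular function `ψ̃'₀,₁`. -/
noncomputable def A' (x : ℝ × ℝ) : ℝ := - Real.sign (x.1 * x.2) * B' x

open Set Filter

noncomputable def fG (u : ℝ) : ℝ := Real.exp (-u) * u ^ (-(1:ℝ)/2)

lemma fG_int : IntegrableOn fG (Set.Ioi 0) := by
  have := Real.GammaIntegral_convergent (s := 1/2) (by norm_num)
  have he : (fun u : ℝ => Real.exp (-u) * u ^ ((1:ℝ)/2 - 1)) = fG := by
    funext u; rw [fG, show (1:ℝ)/2 - 1 = -(1:ℝ)/2 by norm_num]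
  rwa [he] at this

lemma Ginc_zero : Ginc 0 = Real.sqrt Real.pi := by
  have := Real.Gamma_eq_integral (s := 1/2) (by norm_num)
  rw [Real.Gamma_one_half_eq] at this
  rw [Ginc]
  have he : ∀ u : ℝ, Real.exp (-u) * u ^ (-(1:ℝ)/2) = Real.exp (-u) * u ^ ((1:ℝ)/2 - 1) := by
    intro u; rw [show (1:ℝ)/2 - 1 = -(1:ℝ)/2 by norm_num]
  simp_rw [he]
  exact this.symm

lemma Ginc_eq {a : ℝ} (ha : 0 ≤ a) :
    Ginc a = Real.sqrt Real.pi - ∫ u in (0:ℝ)..a, fG u := by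
  have hsplit : ∫ u in Set.Ioi (0:ℝ), fG u
      = (∫ u in Set.Ioc 0 a, fG u) + ∫ u in Set.Ioi a, fG u := by
    rw [← setIntegral_union]
    · rw [Set.Ioc_union_Ioi_eq_Ioi ha]
    · exact Set.Ioc_disjoint_Ioi le_rfl
    · exact measurableSet_Ioi
    · exact fG_int.mono_set Set.Ioc_subset_Ioi_self
    · exact fG_int.mono_set (Set.Ioi_subset_Ioi ha)
  have h0 : Ginc 0 = ∫ u in Set.Ioi (0:ℝ), fG u := rfl
  have ha' : Ginc a = ∫ u in Set.Ioi a, fG u := rfl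
  rw [ha', intervalIntegral.integral_of_le ha]
  rw [← Ginc_zero, h0, hsplit]
  ring

lemma fG_contOn : ContinuousOn fG (Set.Ioi 0) := by
  apply ContinuousOn.mul
  · exact (Real.continuous_exp.comp continuous_neg).continuousOn
  · exact continuousOn_id.rpow_const fun x hx => Or.inl (ne_of_gt hx)

lemma fG_contAt {a : ℝ} (ha : 0 < a) : ContinuousAt fG a := by
  apply ContinuousAt.mul
  · exact (Real.continuous_exp.comp continuous_neg).continuousAt
  · exact Real.continuousAt_rpow_const a _ (Or.inl ha.ne')

lemma fG_intOn {a b : ℝ} (ha : 0 ≤ a) (hb : 0 ≤ b) : IntervalIntegrable fG volume a b := by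
  have key : ∀ u v : ℝ, 0 ≤ u → u ≤ v → IntervalIntegrable fG volume u v := by
    intro u v hu huv
    rw [intervalIntegrable_iff_integrableOn_Ioc_of_le huv]
    exact fG_int.mono_set fun w hw => lt_of_le_of_lt hu hw.1
  rcases le_total a b with h | h
  · exact key a b ha h
  · exact (key b a hb h).symm

lemma hasDerivAt_Ginc {a : ℝ} (ha : 0 < a) : HasDerivAt Ginc (-(fG a)) a := by
  have H : HasDerivAt (fun x => ∫ u in (0:ℝ)..x, fG u) (fG a) a := by
    refine intervalIntegral.integral_hasDerivAt_right (fG_intOn le_rfl ha.le)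
      ⟨Set.Ioi 0, Ioi_mem_nhds ha, fG_contOn.aestronglyMeasurable measurableSet_Ioi⟩
      (fG_contAt ha)
  have H2 : HasDerivAt (fun x => Real.sqrt Real.pi - ∫ u in (0:ℝ)..x, fG u) (-(fG a)) a := by
    exact H.const_sub _
  refine H2.congr_of_eventuallyEq ?_
  filter_upwards [eventually_gt_nhds ha] with x hx
  exact Ginc_eq hx.le

lemma continuousOn_Ginc {C : ℝ} (hC : 0 ≤ C) : ContinuousOn Ginc (Icc 0 C) := by
  have h1 : ContinuousOn (fun x => Real.sqrt Real.pi - ∫ u in (0:ℝ)..x, fG u) (Icc 0 C) := by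
    apply continuousOn_const.sub
    have := intervalIntegral.continuousOn_primitive_interval'
      (fG_intOn le_rfl hC (b := C)) (a := 0) (by simp [hC])
    rwa [uIcc_of_le hC] at this
  exact (h1.congr fun x hx => Ginc_eq hx.1).congr fun x hx => rfl
lemma Ginc_sq {β : ℝ} (hβ : 0 < β) {t : ℝ} (ht : 0 ≤ t) :
    Ginc (β*t^2) = Real.sqrt Real.pi
      - ∫ s in (0:ℝ)..t, 2*Real.sqrt β * Real.exp (-(β*s^2)) := by
  set g : ℝ → ℝ := fun s => 2*Real.sqrt β * Real.exp (-(β*s^2)) with hg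
  have hgc : Continuous g := by
    apply continuous_const.mul
    exact Real.continuous_exp.comp (continuous_const.mul (continuous_pow 2)).neg
  set D : ℝ → ℝ := fun s => Ginc (β*s^2) + ∫ r in (0:ℝ)..s, g r with hD
  rcases eq_or_lt_of_le ht with rfl | ht'
  · simp [D, Ginc_zero]
  · have hcont : ContinuousOn D (Icc 0 t) := by
      apply ContinuousOn.add
      · have hmap : MapsTo (fun s : ℝ => β*s^2) (Icc 0 t) (Icc 0 (β*t^2)) := by
          intro s hs
          constructor
          · show (0:ℝ) ≤ β*s^2
            positivity
          · show β*s^2 ≤ β*t^2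
            have h1 : s^2 ≤ t^2 := by nlinarith [hs.1, hs.2]
            exact mul_le_mul_of_nonneg_left h1 hβ.le
        exact (continuousOn_Ginc (by positivity)).comp
          ((continuous_const.mul (continuous_pow 2)).continuousOn) hmap
      · exact (intervalIntegral.continuous_primitive
          (fun a b => hgc.intervalIntegrable a b) 0).continuousOn
    have hderiv : ∀ s ∈ Ioo 0 t, HasDerivAt D 0 s := by
      intro s hs
      have hs0 : (0:ℝ) < s := hs.1
      have hargpos : (0:ℝ) < β*s^2 := by positivity
      have harg : HasDerivAt (fun r : ℝ => β*r^2) (β*(2*s)) s := by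
        have := (hasDerivAt_pow 2 s).const_mul β
        refine this.congr_deriv (Eq.symm ?_)
        norm_num
      have h1 : HasDerivAt (fun r : ℝ => Ginc (β*r^2)) (-(fG (β*s^2)) * (β*(2*s))) s :=
        HasDerivAt.comp (h := fun r : ℝ => β*r^2) s (hasDerivAt_Ginc hargpos) harg
      have h2 : HasDerivAt (fun r : ℝ => ∫ x in (0:ℝ)..r, g x) (g s) s :=
        intervalIntegral.integral_hasDerivAt_right (hgc.intervalIntegrable 0 s)
          hgc.aestronglyMeasurable.stronglyMeasurableAtFilter hgc.continuousAt
      have h3 := h1.add h2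
      refine h3.congr_deriv (Eq.symm ?_)
      have hfGv : fG (β*s^2) = Real.exp (-(β*s^2)) / (Real.sqrt β * s) := by
        rw [fG]
        have : ((β*s^2) : ℝ) ^ (-(1:ℝ)/2) = 1/(Real.sqrt β * s) := by
          rw [show (-(1:ℝ)/2) = -(1/2 : ℝ) by norm_num, Real.rpow_neg hargpos.le,
            ← Real.sqrt_eq_rpow, Real.sqrt_mul hβ.le, Real.sqrt_sq hs0.le, one_div]
        rw [this]; ring
      rw [hfGv, hg]
      have hbne : Real.sqrt β ≠ 0 := by positivity
      field_simp
      linear_combination (-(2*Real.exp (-(β*s^2)))) * Real.sq_sqrt hβ.le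
    obtain ⟨c, _, hc⟩ := exists_hasDerivAt_eq_slope D (fun _ => 0) ht' hcont hderiv
    have : D t = D 0 := by
      have h0 : (0:ℝ) = (D t - D 0) / (t - 0) := hc
      field_simp at h0
      linarith
    have hD0 : D 0 = Real.sqrt Real.pi := by simp [D, Ginc_zero]
    have hDt : D t = Ginc (β*t^2) + ∫ r in (0:ℝ)..t, g r := rfl
    rw [hDt, hD0] at this
    linarith [this]
lemma hasDerivAt_Apath (x₂ x₃ : ℝ) (hx₃ : x₃ ≠ 0) :
    HasDerivAt (fun t : ℝ =>
      (1/(2*Real.sqrt Real.pi)) * (x₂+t*x₃) * Real.sign x₃ * Ginc (2*Real.pi*(x₃+t*x₂)^2) *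
        Real.exp (-(Real.pi*((x₂+t*x₃)^2-(x₃+t*x₂)^2))))
      ((1/(2*Real.sqrt Real.pi)) * |x₃| * Ginc (2*Real.pi*x₃^2) * Real.exp (-(Real.pi*(x₂^2-x₃^2)))
        - Real.sqrt 2 * x₂^2 * Real.exp (-(Real.pi*(x₂^2+x₃^2)))) 0 := by
  have hu : HasDerivAt (fun t : ℝ => x₂+t*x₃) x₃ 0 := by
    simpa using ((hasDerivAt_id (0:ℝ)).mul_const x₃).const_add x₂
  have hv : HasDerivAt (fun t : ℝ => x₃+t*x₂) x₂ 0 := by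
    simpa using ((hasDerivAt_id (0:ℝ)).mul_const x₂).const_add x₃
  have hpos : (0:ℝ) < 2*Real.pi*x₃^2 := by positivity
  have harg : HasDerivAt (fun t : ℝ => 2*Real.pi*(x₃+t*x₂)^2) (2*Real.pi*(2*x₃*x₂)) 0 := by
    have := (hv.pow 2).const_mul (2*Real.pi)
    refine this.congr_deriv (Eq.symm ?_)
    norm_num
  have h0 : 2*Real.pi*(x₃+(0:ℝ)*x₂)^2 = 2*Real.pi*x₃^2 := by ring
  have hG : HasDerivAt (fun t : ℝ => Ginc (2*Real.pi*(x₃+t*x₂)^2))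
      (-(fG (2*Real.pi*x₃^2)) * (2*Real.pi*(2*x₃*x₂))) 0 := by
    have hg0 : HasDerivAt Ginc (-(fG (2*Real.pi*x₃^2)))
        ((fun t : ℝ => 2*Real.pi*(x₃+t*x₂)^2) 0) := by
      simp only [h0]
      exact hasDerivAt_Ginc hpos
    exact hg0.comp 0 harg
  have hexp : HasDerivAt
      (fun t : ℝ => Real.exp (-(Real.pi*((x₂+t*x₃)^2-(x₃+t*x₂)^2)))) 0 0 := by
    have hin : HasDerivAt (fun t : ℝ => -(Real.pi*((x₂+t*x₃)^2-(x₃+t*x₂)^2))) 0 0 := by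
      have := (((hu.pow 2).sub (hv.pow 2)).const_mul Real.pi).neg
      refine this.congr_deriv (Eq.symm ?_)
      norm_num
      ring
    simpa using hin.exp
  have h5 : HasDerivAt (fun t : ℝ => (1/(2*Real.sqrt Real.pi)) * (x₂+t*x₃) * Real.sign x₃)
      ((1/(2*Real.sqrt Real.pi)) * x₃ * Real.sign x₃) 0 := by
    simpa using ((hu.const_mul (1/(2*Real.sqrt Real.pi))).mul_const (Real.sign x₃))
  have h6 := (h5.mul hG).mul hexp
  refine h6.congr_deriv (Eq.symm ?_)
  have e1 : x₂ + (0:ℝ)*x₃ = x₂ := by ring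
  have e2 : x₃ + (0:ℝ)*x₂ = x₃ := by ring
  rw [e1, e2, mul_zero, add_zero]
  have hfG : fG (2*Real.pi*x₃^2)
      = Real.exp (-(2*Real.pi*x₃^2)) / (Real.sqrt 2 * Real.sqrt Real.pi * |x₃|) := by
    rw [fG]
    have : ((2*Real.pi*x₃^2) : ℝ) ^ (-(1:ℝ)/2) = 1/(Real.sqrt 2 * Real.sqrt Real.pi * |x₃|) := by
      rw [show (-(1:ℝ)/2) = -(1/2 : ℝ) by norm_num, Real.rpow_neg hpos.le, ← Real.sqrt_eq_rpow]
      rw [show (2*Real.pi*x₃^2 : ℝ) = (2*Real.pi)*x₃^2 by ring, Real.sqrt_mul (by positivity),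
        Real.sqrt_sq_eq_abs, Real.sqrt_mul (by norm_num), one_div]
    rw [this]
    ring
  have hE : Real.exp (-(2*Real.pi*x₃^2)) * Real.exp (-(Real.pi*(x₂^2-x₃^2)))
      = Real.exp (-(Real.pi*(x₂^2+x₃^2))) := by
    rw [← Real.exp_add]; congr 1; ring
  rw [hfG, ← hE]
  set b := Real.sqrt Real.pi with hbdef
  set a := Real.sqrt 2 with hadef
  have hb : b * b = Real.pi := Real.mul_self_sqrt Real.pi_pos.le
  have ha : a * a = (2:ℝ) := Real.mul_self_sqrt (by norm_num)
  have hbne : b ≠ 0 := by positivity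
  have hane : a ≠ 0 := by positivity
  have habs : |x₃| ≠ 0 := abs_ne_zero.mpr hx₃
  rcases hx₃.lt_or_gt with h | h
  · rw [Real.sign_of_neg h, abs_of_neg h]
    rw [← hb, ← ha]
    field_simp
    ring
  · rw [Real.sign_of_pos h, abs_of_pos h]
    rw [← hb, ← ha]
    field_simp
    ring
lemma min_abs_eq {p q : ℝ} (h : q^2 < p^2) : min |p-q| |p+q| = |p| - |q| := by
  rcases le_total 0 p with hp|hp <;> rcases le_total 0 q with hq|hq
  · have hqp : q < p := by nlinarith
    rw [abs_of_nonneg hp, abs_of_nonneg hq, abs_of_pos (by linarith : (0:ℝ) < p - q),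
      abs_of_nonneg (by linarith : (0:ℝ) ≤ p+q), min_eq_left (by linarith)]
  · have hqp : -q < p := by nlinarith
    rw [abs_of_nonneg hp, abs_of_nonpos hq, abs_of_nonneg (by linarith : (0:ℝ) ≤ p - q),
      abs_of_pos (by linarith : (0:ℝ) < p+q), min_eq_right (by linarith)]
    ring
  · have hqp : q < -p := by nlinarith
    rw [abs_of_nonpos hp, abs_of_nonneg hq, abs_of_neg (by linarith : p - q < 0),
      abs_of_nonpos (by linarith : p+q ≤ 0), min_eq_right (by linarith)]
    ring
  · have hpq : p < q := by nlinarith [sq_nonneg (p+q), sq_nonneg (p-q)]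
    have hp0 : p < 0 := by nlinarith [sq_nonneg q]
    rw [abs_of_nonpos hp, abs_of_nonpos hq, abs_of_neg (by linarith : p - q < 0),
      abs_of_neg (by linarith : p+q < 0), min_eq_left (by linarith)]
    ring

lemma hexp_path (x₂ x₃ : ℝ) : HasDerivAt
    (fun t : ℝ => Real.exp (-(Real.pi*((x₂+t*x₃)^2-(x₃+t*x₂)^2)))) 0 0 := by
  have hu : HasDerivAt (fun t : ℝ => x₂+t*x₃) x₃ 0 := by
    simpa using ((hasDerivAt_id (0:ℝ)).mul_const x₃).const_add x₂
  have hv : HasDerivAt (fun t : ℝ => x₃+t*x₂) x₂ 0 := by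
    simpa using ((hasDerivAt_id (0:ℝ)).mul_const x₂).const_add x₃
  have hin : HasDerivAt (fun t : ℝ => -(Real.pi*((x₂+t*x₃)^2-(x₃+t*x₂)^2))) 0 0 := by
    have := (((hu.pow 2).sub (hv.pow 2)).const_mul Real.pi).neg
    refine this.congr_deriv (Eq.symm ?_)
    norm_num
    ring
  simpa using hin.exp

lemma hasDerivAt_extra (x₂ x₃ s₂ s₃ : ℝ) :
    HasDerivAt (fun t : ℝ => -(s₂*s₃) * ((1/2)*(s₂*(x₂+t*x₃) - s₃*(x₃+t*x₂)) *
        Real.exp (-(Real.pi*((x₂+t*x₃)^2-(x₃+t*x₂)^2)))))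
      (-(s₂*s₃) * ((1/2)*(s₂*x₃ - s₃*x₂) * Real.exp (-(Real.pi*(x₂^2-x₃^2))))) 0 := by
  have hu : HasDerivAt (fun t : ℝ => x₂+t*x₃) x₃ 0 := by
    simpa using ((hasDerivAt_id (0:ℝ)).mul_const x₃).const_add x₂
  have hv : HasDerivAt (fun t : ℝ => x₃+t*x₂) x₂ 0 := by
    simpa using ((hasDerivAt_id (0:ℝ)).mul_const x₂).const_add x₃
  have hlin : HasDerivAt (fun t : ℝ => (1/2)*(s₂*(x₂+t*x₃) - s₃*(x₃+t*x₂)))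
      ((1/2)*(s₂*x₃ - s₃*x₂)) 0 := by
    simpa using (((hu.const_mul s₂).sub (hv.const_mul s₃)).const_mul (1/2 : ℝ))
  have h := (hlin.mul (hexp_path x₂ x₃)).const_mul (-(s₂*s₃))
  refine h.congr_deriv (Eq.symm ?_)
  rw [show x₂ + (0:ℝ)*x₃ = x₂ by ring, show x₃ + (0:ℝ)*x₂ = x₃ by ring]
  ring

lemma two_rpow : (2:ℝ)^(-(3:ℝ)/2) = 1/(2*Real.sqrt 2) := by
  rw [show (-(3:ℝ)/2) = -(3/2:ℝ) by norm_num, Real.rpow_neg (by norm_num : (0:ℝ) ≤ 2),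
    show (3/2:ℝ) = 1 + 1/2 by norm_num, Real.rpow_add (by norm_num : (0:ℝ) < 2),
    Real.rpow_one, ← Real.sqrt_eq_rpow, one_div]

lemma final_scalar (x₂ : ℝ) (E : ℝ) :
    -(1/(2*Real.sqrt 2*Real.pi))*E + Real.sqrt 2*x₂^2*E
      = (2:ℝ)^(-(3:ℝ)/2) * (4*x₂^2 - 1/Real.pi) * E := by
  rw [two_rpow]
  have h2 : Real.sqrt 2 * Real.sqrt 2 = 2 := Real.mul_self_sqrt (by norm_num)
  have h2ne : Real.sqrt 2 ≠ 0 := by positivity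
  have hpne : Real.pi ≠ 0 := Real.pi_ne_zero
  field_simp
  linear_combination (2*Real.pi*x₂^2*E) * h2

lemma ev_lt (c d : ℝ) (hc : c < 0) : ∀ᶠ t in nhds (0:ℝ), c + t*d < 0 := by
  have hcont : Continuous (fun t:ℝ => c+t*d) := by continuity
  have ht0 : Filter.Tendsto (fun t:ℝ => c+t*d) (nhds 0) (nhds c) := by
    simpa using hcont.tendsto 0
  exact ht0.eventually (eventually_lt_nhds hc)

lemma ev_gt (c d : ℝ) (hc : 0 < c) : ∀ᶠ t in nhds (0:ℝ), 0 < c + t*d := by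
  have hcont : Continuous (fun t:ℝ => c+t*d) := by continuity
  have ht0 : Filter.Tendsto (fun t:ℝ => c+t*d) (nhds 0) (nhds c) := by
    simpa using hcont.tendsto 0
  exact ht0.eventually (eventually_gt_nhds hc)


set_option maxHeartbeats 1000000 in
/-- Paper Theorem 5.11 (second component of `dφ₀,₁ = φ₁,₁`): for every `x ∈ ℝ²`,
`t ↦ (A+A')(x₂ + t·x₃, x₃ + t·x₂)` is differentiable at `t = 0`, and
`(B+B')(x) - d/dt|₀ (A+A')(x₂+t·x₃, x₃+t·x₂) = 2^{-3/2}(4x₂² - 1/π)e^{-π(x₂²+x₃²)}`. -/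
theorem stmt10 (x₂ x₃ : ℝ) :
    DifferentiableAt ℝ
      (fun t : ℝ => A (x₂ + t * x₃, x₃ + t * x₂) + A' (x₂ + t * x₃, x₃ + t * x₂)) 0 ∧
    (B (x₂, x₃) + B' (x₂, x₃))
      - deriv (fun t : ℝ => A (x₂ + t * x₃, x₃ + t * x₂) + A' (x₂ + t * x₃, x₃ + t * x₂)) 0
      = (2:ℝ) ^ (-(3:ℝ)/2) * (4 * x₂ ^ 2 - 1 / Real.pi) *
          Real.exp (-(Real.pi * (x₂ ^ 2 + x₃ ^ 2))) := by

  rcases eq_or_ne x₃ 0 with rfl | h3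
  · rcases eq_or_ne x₂ 0 with rfl | h2
    · -- x₂ = x₃ = 0
      have hf : (fun t : ℝ => A ((0:ℝ) + t * 0, (0:ℝ) + t * 0) + A' ((0:ℝ) + t * 0, (0:ℝ) + t * 0))
          = fun _ => (0:ℝ) := by
        funext t
        simp [A, A', B']
      constructor
      · rw [hf]; exact differentiableAt_const 0
      · rw [hf, deriv_const]
        have h := final_scalar 0 (Real.exp (-(Real.pi*((0:ℝ)^2+(0:ℝ)^2))))
        simp only [B, B']
        norm_num at h ⊢
        linarith [h]
    · -- x₃ = 0, x₂ ≠ 0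
      -- x₃ = 0, x₂ ≠ 0
      have hβ : (0:ℝ) < 2*Real.pi*x₂^2 := by positivity
      have hspne : Real.sqrt Real.pi ≠ 0 := by positivity
      have hgc : Continuous (fun s : ℝ => 2*Real.sqrt (2*Real.pi*x₂^2) *
          Real.exp (-(2*Real.pi*x₂^2*s^2))) := by
        apply continuous_const.mul
        exact Real.continuous_exp.comp (continuous_const.mul (continuous_pow 2)).neg
      have hW : HasDerivAt (fun t : ℝ => ∫ s in (0:ℝ)..t, 2*Real.sqrt (2*Real.pi*x₂^2) *
            Real.exp (-(2*Real.pi*x₂^2*s^2)))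
          (2*Real.sqrt (2*Real.pi*x₂^2) * Real.exp (-(2*Real.pi*x₂^2*(0:ℝ)^2))) 0 :=
        intervalIntegral.integral_hasDerivAt_right (hgc.intervalIntegrable 0 0)
          hgc.aestronglyMeasurable.stronglyMeasurableAtFilter hgc.continuousAt
      have hlin : HasDerivAt (fun t : ℝ => t/2 - (1/(2*Real.sqrt Real.pi)) *
            ∫ s in (0:ℝ)..t, 2*Real.sqrt (2*Real.pi*x₂^2) * Real.exp (-(2*Real.pi*x₂^2*s^2)))
          (1/2 - (1/(2*Real.sqrt Real.pi)) * (2*Real.sqrt (2*Real.pi*x₂^2) *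
            Real.exp (-(2*Real.pi*x₂^2*(0:ℝ)^2)))) 0 := by
        exact (((hasDerivAt_id (0:ℝ)).div_const 2).sub
          (hW.const_mul (1/(2*Real.sqrt Real.pi)))).congr_deriv (by simp)
      have HF : HasDerivAt (fun t : ℝ => (abs x₂) * ((t/2 - (1/(2*Real.sqrt Real.pi)) *
            ∫ s in (0:ℝ)..t, 2*Real.sqrt (2*Real.pi*x₂^2) * Real.exp (-(2*Real.pi*x₂^2*s^2))) *
            Real.exp (-(Real.pi*((x₂+t*0)^2-((0:ℝ)+t*x₂)^2)))))
          ((1/2)*(abs x₂)*Real.exp (-(Real.pi*(x₂^2+(0:ℝ)^2)))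
            - Real.sqrt 2*x₂^2*Real.exp (-(Real.pi*(x₂^2+(0:ℝ)^2)))) 0 := by
        have h := ((hlin.mul (hexp_path x₂ 0)).const_mul (abs x₂))
        refine h.congr_deriv (Eq.symm ?_)
        rw [show x₂+(0:ℝ)*(0:ℝ) = x₂ by ring, show (0:ℝ)+(0:ℝ)*x₂ = (0:ℝ) by ring]
        rw [mul_zero, add_zero]
        have hsq : Real.sqrt (2*Real.pi*x₂^2) = Real.sqrt 2 * Real.sqrt Real.pi * (abs x₂) := by
          rw [show 2*Real.pi*x₂^2 = (2*Real.pi)*x₂^2 by ring, Real.sqrt_mul (by positivity),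
            Real.sqrt_sq_eq_abs, Real.sqrt_mul (by norm_num)]
        rw [hsq]
        have hE1 : Real.exp (-(2*Real.pi*x₂^2*(0:ℝ)^2)) = 1 := by norm_num
        have hE2 : Real.exp (-(Real.pi*(x₂^2+(0:ℝ)^2))) = Real.exp (-(Real.pi*x₂^2)) := by
          norm_num
        have hE3 : Real.exp (-(Real.pi*(x₂^2-(0:ℝ)^2))) = Real.exp (-(Real.pi*x₂^2)) := by
          norm_num
        rw [hE1, hE2, hE3]
        field_simp
        ring_nf
        rw [sq_abs]
      have hev : (fun t : ℝ => A (x₂ + t * 0, (0:ℝ) + t * x₂) + A' (x₂ + t * 0, (0:ℝ) + t * x₂))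
          =ᶠ[nhds (0:ℝ)] (fun t : ℝ => (abs x₂) * ((t/2 - (1/(2*Real.sqrt Real.pi)) *
            ∫ s in (0:ℝ)..t, 2*Real.sqrt (2*Real.pi*x₂^2) * Real.exp (-(2*Real.pi*x₂^2*s^2))) *
            Real.exp (-(Real.pi*((x₂+t*0)^2-((0:ℝ)+t*x₂)^2))))) := by
        filter_upwards [Ioo_mem_nhds (by norm_num : (-1:ℝ) < 0) (by norm_num : (0:ℝ) < 1)]
          with t ht
        simp only [A, A', B']
        rw [show x₂+t*(0:ℝ) = x₂ by ring, show (0:ℝ)+t*x₂ = t*x₂ by ring]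
        have ht2 : t^2 < 1 := by nlinarith [ht.1, ht.2]
        rcases lt_trichotomy t 0 with htneg | rfl | htpos
        · -- t < 0
          have hcond : (t*x₂)^2 < x₂^2 := by nlinarith [sq_nonneg x₂, (by positivity : (0:ℝ) < x₂^2)]
          rw [if_pos (by nlinarith : x₂^2 - (t*x₂)^2 > 0), min_abs_eq hcond]
          rw [show 2*Real.pi*(t*x₂)^2 = 2*Real.pi*x₂^2*(-t)^2 by ring,
            Ginc_sq hβ (by linarith : (0:ℝ) ≤ -t)]
          have hodd : (∫ s in (0:ℝ)..(-t), 2*Real.sqrt (2*Real.pi*x₂^2) *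
                Real.exp (-(2*Real.pi*x₂^2*s^2)))
              = -∫ s in (0:ℝ)..t, 2*Real.sqrt (2*Real.pi*x₂^2) *
                Real.exp (-(2*Real.pi*x₂^2*s^2)) := by
            have hcn := intervalIntegral.integral_comp_neg (a := (0:ℝ)) (b := t)
              (f := fun s => 2*Real.sqrt (2*Real.pi*x₂^2) * Real.exp (-(2*Real.pi*x₂^2*s^2)))
            simp only [neg_zero, neg_sq] at hcn
            rw [intervalIntegral.integral_symm, ← hcn]
          rw [hodd]
          have habsT : (abs (t*x₂)) = (abs t)*(abs x₂) := abs_mul t x₂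
          rcases h2.lt_or_gt with hx2 | hx2
          · rw [Real.sign_of_pos (by nlinarith : (0:ℝ) < t*x₂),
              Real.sign_of_neg (by nlinarith : x₂*(t*x₂) < 0),
              abs_of_neg hx2, abs_of_pos (by nlinarith : (0:ℝ) < t*x₂)]
            field_simp
            ring
          · rw [Real.sign_of_neg (by nlinarith : t*x₂ < 0),
              Real.sign_of_neg (by nlinarith : x₂*(t*x₂) < 0),
              abs_of_pos hx2, abs_of_neg (by nlinarith : t*x₂ < 0)]
            field_simp
            ring
        · -- t = 0
          norm_num [Real.sign_zero]
        · -- t > 0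
          have hcond : (t*x₂)^2 < x₂^2 := by nlinarith [sq_nonneg x₂, (by positivity : (0:ℝ) < x₂^2)]
          rw [if_pos (by nlinarith : x₂^2 - (t*x₂)^2 > 0), min_abs_eq hcond]
          rw [show 2*Real.pi*(t*x₂)^2 = 2*Real.pi*x₂^2*t^2 by ring, Ginc_sq hβ htpos.le]
          rcases h2.lt_or_gt with hx2 | hx2
          · rw [Real.sign_of_neg (by nlinarith : t*x₂ < 0),
              Real.sign_of_pos (by nlinarith : (0:ℝ) < x₂*(t*x₂)),
              abs_of_neg hx2, abs_of_neg (by nlinarith : t*x₂ < 0)]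
            field_simp
            ring
          · rw [Real.sign_of_pos (by nlinarith : (0:ℝ) < t*x₂),
              Real.sign_of_pos (by nlinarith : (0:ℝ) < x₂*(t*x₂)),
              abs_of_pos hx2, abs_of_pos (by nlinarith : (0:ℝ) < t*x₂)]
            field_simp
            ring
      have Hf : HasDerivAt (fun t : ℝ => A (x₂ + t * 0, (0:ℝ) + t * x₂)
            + A' (x₂ + t * 0, (0:ℝ) + t * x₂))
          ((1/2)*(abs x₂)*Real.exp (-(Real.pi*(x₂^2+(0:ℝ)^2)))
            - Real.sqrt 2*x₂^2*Real.exp (-(Real.pi*(x₂^2+(0:ℝ)^2)))) 0 :=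
        HF.congr_of_eventuallyEq hev
      refine ⟨Hf.differentiableAt, ?_⟩
      rw [Hf.deriv]
      simp only [B, B']
      rw [if_pos (by nlinarith [(by positivity : (0:ℝ) < x₂^2)] : x₂^2 - (0:ℝ)^2 > 0)]
      have hE2 : Real.exp (-(Real.pi*(x₂^2-(0:ℝ)^2))) = Real.exp (-(Real.pi*(x₂^2+(0:ℝ)^2))) := by
        norm_num
      have hmin : min |x₂-(0:ℝ)| |x₂+(0:ℝ)| = (abs x₂) := by norm_num
      rw [hE2, hmin]
      have h := final_scalar x₂ (Real.exp (-(Real.pi*(x₂^2+(0:ℝ)^2))))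
      simp only [abs_zero, mul_zero, zero_mul, add_zero]
      linarith [h]
  · -- x₃ ≠ 0
    by_cases hq : x₂^2 ≤ x₃^2
    · -- q₀ ≤ 0
      have HF := hasDerivAt_Apath x₂ x₃ h3
      have hsv : ∀ᶠ t in nhds (0:ℝ), Real.sign (x₃+t*x₂) = Real.sign x₃ := by
        rcases h3.lt_or_gt with hx3 | hx3
        · filter_upwards [ev_lt x₃ x₂ hx3] with t htv
          rw [Real.sign_of_neg htv, Real.sign_of_neg hx3]
        · filter_upwards [ev_gt x₃ x₂ hx3] with t htv
          rw [Real.sign_of_pos htv, Real.sign_of_pos hx3]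
      have hev : (fun t : ℝ => A (x₂+t*x₃, x₃+t*x₂) + A' (x₂+t*x₃, x₃+t*x₂)) =ᶠ[nhds (0:ℝ)]
          (fun t : ℝ => (1/(2*Real.sqrt Real.pi)) * (x₂+t*x₃) * Real.sign x₃ *
            Ginc (2*Real.pi*(x₃+t*x₂)^2) *
            Real.exp (-(Real.pi*((x₂+t*x₃)^2-(x₃+t*x₂)^2)))) := by
        filter_upwards [Ioo_mem_nhds (by norm_num : (-1:ℝ) < 0) (by norm_num : (0:ℝ) < 1), hsv]
          with t ht hsvt
        have ht2 : t^2 < 1 := by nlinarith [ht.1, ht.2]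
        have hcond : ¬((x₂+t*x₃)^2 - (x₃+t*x₂)^2 > 0) := by
          push_neg
          nlinarith [mul_nonneg (sub_nonneg.2 hq) (by nlinarith : (0:ℝ) ≤ 1 - t^2)]
        simp only [A, A', B']
        rw [if_neg hcond, hsvt]
        ring
      have Hf := HF.congr_of_eventuallyEq hev
      refine ⟨Hf.differentiableAt, ?_⟩
      rw [Hf.deriv]
      simp only [B, B']
      rw [if_neg (by push_neg; nlinarith : ¬(x₂^2 - x₃^2 > 0))]
      linarith [final_scalar x₂ (Real.exp (-(Real.pi*(x₂^2+x₃^2))))]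
    · -- q₀ > 0
      push_neg at hq
      have h2 : x₂ ≠ 0 := by
        intro h; rw [h] at hq; nlinarith [sq_nonneg x₃]
      have HF := (hasDerivAt_Apath x₂ x₃ h3).add
        (hasDerivAt_extra x₂ x₃ (Real.sign x₂) (Real.sign x₃))
      have hev : (fun t : ℝ => A (x₂+t*x₃, x₃+t*x₂) + A' (x₂+t*x₃, x₃+t*x₂)) =ᶠ[nhds (0:ℝ)]
          (fun t : ℝ => (1/(2*Real.sqrt Real.pi)) * (x₂+t*x₃) * Real.sign x₃ *
              Ginc (2*Real.pi*(x₃+t*x₂)^2) *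
              Real.exp (-(Real.pi*((x₂+t*x₃)^2-(x₃+t*x₂)^2)))
            + -(Real.sign x₂*Real.sign x₃) * ((1/2)*(Real.sign x₂*(x₂+t*x₃)
                - Real.sign x₃*(x₃+t*x₂)) *
              Real.exp (-(Real.pi*((x₂+t*x₃)^2-(x₃+t*x₂)^2))))) := by
        have hbase : ∀ t : ℝ, t ∈ Ioo (-1:ℝ) 1 →
            ((x₃+t*x₂)^2 < (x₂+t*x₃)^2) := by
          intro t ht
          have ht2 : t^2 < 1 := by nlinarith [ht.1, ht.2]
          nlinarith [mul_pos (sub_pos.2 hq) (by nlinarith : (0:ℝ) < 1-t^2)]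
        rcases h3.lt_or_gt with hx3 | hx3 <;> rcases h2.lt_or_gt with hx2 | hx2
        · filter_upwards [Ioo_mem_nhds (by norm_num : (-1:ℝ) < 0) (by norm_num : (0:ℝ) < 1),
            ev_lt x₃ x₂ hx3, ev_lt x₂ x₃ hx2] with t ht hv hu
          have hqq := hbase t ht
          simp only [A, A', B']
          rw [if_pos (by linarith : (x₂+t*x₃)^2 - (x₃+t*x₂)^2 > 0), min_abs_eq hqq,
            Real.sign_of_neg hv, Real.sign_of_neg hx3, Real.sign_of_neg hx2,
            Real.sign_of_pos (mul_pos_of_neg_of_neg hu hv), abs_of_neg hu, abs_of_neg hv]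
          ring
        · filter_upwards [Ioo_mem_nhds (by norm_num : (-1:ℝ) < 0) (by norm_num : (0:ℝ) < 1),
            ev_lt x₃ x₂ hx3, ev_gt x₂ x₃ hx2] with t ht hv hu
          have hqq := hbase t ht
          simp only [A, A', B']
          rw [if_pos (by linarith : (x₂+t*x₃)^2 - (x₃+t*x₂)^2 > 0), min_abs_eq hqq,
            Real.sign_of_neg hv, Real.sign_of_neg hx3, Real.sign_of_pos hx2,
            Real.sign_of_neg (mul_neg_of_pos_of_neg hu hv), abs_of_pos hu, abs_of_neg hv]
          ring
        · filter_upwards [Ioo_mem_nhds (by norm_num : (-1:ℝ) < 0) (by norm_num : (0:ℝ) < 1),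
            ev_gt x₃ x₂ hx3, ev_lt x₂ x₃ hx2] with t ht hv hu
          have hqq := hbase t ht
          simp only [A, A', B']
          rw [if_pos (by linarith : (x₂+t*x₃)^2 - (x₃+t*x₂)^2 > 0), min_abs_eq hqq,
            Real.sign_of_pos hv, Real.sign_of_pos hx3, Real.sign_of_neg hx2,
            Real.sign_of_neg (mul_neg_of_neg_of_pos hu hv), abs_of_neg hu, abs_of_pos hv]
          ring
        · filter_upwards [Ioo_mem_nhds (by norm_num : (-1:ℝ) < 0) (by norm_num : (0:ℝ) < 1),
            ev_gt x₃ x₂ hx3, ev_gt x₂ x₃ hx2] with t ht hv hu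
          have hqq := hbase t ht
          simp only [A, A', B']
          rw [if_pos (by linarith : (x₂+t*x₃)^2 - (x₃+t*x₂)^2 > 0), min_abs_eq hqq,
            Real.sign_of_pos hv, Real.sign_of_pos hx3, Real.sign_of_pos hx2,
            Real.sign_of_pos (mul_pos hu hv), abs_of_pos hu, abs_of_pos hv]
          ring
      have Hf := HF.congr_of_eventuallyEq hev
      refine ⟨Hf.differentiableAt, ?_⟩
      rw [Hf.deriv]
      simp only [B, B']
      rw [if_pos (by nlinarith : x₂^2 - x₃^2 > 0), min_abs_eq hq]
      have hfs := final_scalar x₂ (Real.exp (-(Real.pi*(x₂^2+x₃^2))))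
      rcases h3.lt_or_gt with hx3 | hx3 <;> rcases h2.lt_or_gt with hx2 | hx2
      · rw [Real.sign_of_neg hx3, Real.sign_of_neg hx2, abs_of_neg hx3, abs_of_neg hx2]
        linarith [hfs]
      · rw [Real.sign_of_neg hx3, Real.sign_of_pos hx2, abs_of_neg hx3, abs_of_pos hx2]
        linarith [hfs]
      · rw [Real.sign_of_pos hx3, Real.sign_of_neg hx2, abs_of_pos hx3, abs_of_neg hx2]
        linarith [hfs]
      · rw [Real.sign_of_pos hx3, Real.sign_of_pos hx2, abs_of_pos hx3, abs_of_pos hx2]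
        linarith [hfs]
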